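/- (Gap decomposition for the extrapolated primal-dual update.) Let X ⊆ ℝ^n and Y ⊆ ℝ^m be convex sets, let φ : ℝ^n → ℝ and ψ : ℝ^m → ℝ be differentiable, let M be a real m×n matrix, let η_k ≥ 0, let g_k ∈ ℝ^m and h_k ∈ ℝ^n be arbitrary vectors, and let x_{k−1} ∈ ℝ^n, y_{k−1} ∈ ℝ^m. Suppose x_k minimizes x ↦ η_k⟨x, h_k⟩ + D_φ(x, x_{k−1}) over X and y_k maximizes v ↦ η_k⟨g_k, v⟩ − D_ψ(v, y_{k−1}) over Y. Then x_k ∈ X, y_k ∈ Y, and for every u ∈ X and v ∈ Y: η_k(⟨M x_k, v⟩ − ⟨M u, y_k⟩) ≤ E_k − D_φ(u, x_k) + D_φ(u, x_{k−1}) − D_ψ(v, y_k) + D_ψ(v, y_{k−1}), where E_k := η_k⟨M x_k − g_k, v − y_k⟩ − η_k⟨u − x_k, Mᵀ y_k − h_k⟩ − D_ψ(y_k, y_{k−1}) − D_φ(x_k, x_{k−1}). -/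

import Mathlib

/-- The standard inner product on `ℝ^d`. -/
def dotp {d : ℕ} (a b : Fin d → ℝ) : ℝ := ∑ i, a i * b i

/-- The Bregman divergence `D_f(a, b) = f a - f b - ⟨∇f(b), a - b⟩`. -/
noncomputable def breg {d : ℕ} (f : (Fin d → ℝ) → ℝ) (a b : Fin d → ℝ) : ℝ :=
  f a - f b - fderiv ℝ f b (a - b)

lemma dotp_sub_left {d : ℕ} (a b c : Fin d → ℝ) :
    dotp (a - b) c = dotp a c - dotp b c := by
  simp [dotp, sub_mul, Finset.sum_sub_distrib]

lemma dotp_sub_right {d : ℕ} (a b c : Fin d → ℝ) :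
    dotp a (b - c) = dotp a b - dotp a c := by
  simp [dotp, mul_sub, Finset.sum_sub_distrib]

lemma dotp_comm {d : ℕ} (a b : Fin d → ℝ) : dotp a b = dotp b a := by
  simp [dotp, mul_comm]

lemma dotp_transpose {m n : ℕ} (M : Matrix (Fin m) (Fin n) ℝ) (x : Fin n → ℝ)
    (y : Fin m → ℝ) : dotp x (M.transpose.mulVec y) = dotp (M.mulVec x) y := by
  simp only [dotp, Matrix.mulVec, dotProduct, Matrix.transpose_apply,
    Finset.mul_sum, Finset.sum_mul]
  rw [Finset.sum_comm]
  congr 1; ext i; congr 1; ext j; ring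

lemma hasFDerivAt_dotp_left {d : ℕ} (h x : Fin d → ℝ) :
    HasFDerivAt (fun x : Fin d → ℝ => dotp x h)
      (∑ i, h i • (ContinuousLinearMap.proj i : (Fin d → ℝ) →L[ℝ] ℝ)) x := by
  have : HasFDerivAt (fun x : Fin d → ℝ => ∑ i, x i * h i)
      (∑ i : Fin d, h i • (ContinuousLinearMap.proj i : (Fin d → ℝ) →L[ℝ] ℝ)) x := by
    apply HasFDerivAt.fun_sum
    intro i _
    exact (hasFDerivAt_apply i x).mul_const (h i)
  simpa [dotp] using this

lemma dotp_left_deriv_apply {d : ℕ} (h w : Fin d → ℝ) :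
    (∑ i, h i • (ContinuousLinearMap.proj i : (Fin d → ℝ) →L[ℝ] ℝ)) w = dotp w h := by
  simp [dotp, ContinuousLinearMap.sum_apply, mul_comm]

lemma breg_hasFDerivAt {d : ℕ} (f : (Fin d → ℝ) → ℝ) (hf : Differentiable ℝ f)
    (b x : Fin d → ℝ) :
    HasFDerivAt (fun a => breg f a b) (fderiv ℝ f x - fderiv ℝ f b) x := by
  have h1 : (fun a => breg f a b) =
      fun a => f a - f b - ((fderiv ℝ f b) a - (fderiv ℝ f b) b) := by
    funext a; simp [breg, map_sub]
  rw [h1]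
  exact (((hf x).hasFDerivAt.sub_const _)).sub (((fderiv ℝ f b).hasFDerivAt).sub_const _)

lemma vi_min {d : ℕ} {X : Set (Fin d → ℝ)} (hX : Convex ℝ X) {F : (Fin d → ℝ) → ℝ}
    {F' : (Fin d → ℝ) →L[ℝ] ℝ} {xk : Fin d → ℝ} (hxk : xk ∈ X)
    (hF : HasFDerivAt F F' xk) (hmin : IsMinOn F X xk) {u : Fin d → ℝ} (hu : u ∈ X) :
    0 ≤ F' (u - xk) :=
  hmin.localize.hasFDerivWithinAt_nonneg hF.hasFDerivWithinAt
    (sub_mem_posTangentConeAt_of_segment_subset (hX.segment_subset hxk hu))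

lemma vi_max {d : ℕ} {Y : Set (Fin d → ℝ)} (hY : Convex ℝ Y) {G : (Fin d → ℝ) → ℝ}
    {G' : (Fin d → ℝ) →L[ℝ] ℝ} {yk : Fin d → ℝ} (hyk : yk ∈ Y)
    (hG : HasFDerivAt G G' yk) (hmax : IsMaxOn G Y yk) {v : Fin d → ℝ} (hv : v ∈ Y) :
    G' (v - yk) ≤ 0 :=
  hmax.localize.hasFDerivWithinAt_nonpos hG.hasFDerivWithinAt
    (sub_mem_posTangentConeAt_of_segment_subset (hY.segment_subset hyk hv))

theorem stmt_5 {m n : ℕ} (X : Set (Fin n → ℝ)) (hX : Convex ℝ X)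
    (Y : Set (Fin m → ℝ)) (hY : Convex ℝ Y)
    (φ : (Fin n → ℝ) → ℝ) (hφ : Differentiable ℝ φ)
    (ψ : (Fin m → ℝ) → ℝ) (hψ : Differentiable ℝ ψ)
    (M : Matrix (Fin m) (Fin n) ℝ) (ηk : ℝ) (hηk : 0 ≤ ηk)
    (gk : Fin m → ℝ) (hk : Fin n → ℝ)
    (xprev : Fin n → ℝ) (yprev : Fin m → ℝ) (xk : Fin n → ℝ) (yk : Fin m → ℝ)
    (hxkX : xk ∈ X)
    (hxmin : IsMinOn (fun x => ηk * dotp x hk + breg φ x xprev) X xk)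
    (hykY : yk ∈ Y)
    (hymax : IsMaxOn (fun v => ηk * dotp gk v - breg ψ v yprev) Y yk) :
    xk ∈ X ∧ yk ∈ Y ∧
      ∀ u ∈ X, ∀ v ∈ Y,
        ηk * (dotp (M.mulVec xk) v - dotp (M.mulVec u) yk) ≤
          (ηk * dotp (M.mulVec xk - gk) (v - yk)
            - ηk * dotp (u - xk) (M.transpose.mulVec yk - hk)
            - breg ψ yk yprev - breg φ xk xprev)
          - breg φ u xk + breg φ u xprev - breg ψ v yk + breg ψ v yprev := by
  refine ⟨hxkX, hykY, fun u hu v hv => ?_⟩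
  -- derivative of the primal objective at xk
  have hFder : HasFDerivAt (fun x => ηk * dotp x hk + breg φ x xprev)
      (ηk • (∑ i, hk i • (ContinuousLinearMap.proj i : (Fin n → ℝ) →L[ℝ] ℝ)) +
        (fderiv ℝ φ xk - fderiv ℝ φ xprev)) xk :=
    ((hasFDerivAt_dotp_left hk xk).const_mul ηk).add (breg_hasFDerivAt φ hφ xprev xk)
  have hVI1 := vi_min hX hxkX hFder hxmin hu
  -- derivative of the dual objective at yk
  have hGder : HasFDerivAt (fun v => ηk * dotp gk v - breg ψ v yprev)
      (ηk • (∑ i, gk i • (ContinuousLinearMap.proj i : (Fin m → ℝ) →L[ℝ] ℝ)) -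
        (fderiv ℝ ψ yk - fderiv ℝ ψ yprev)) yk := by
    have h1 : (fun v : Fin m → ℝ => ηk * dotp gk v - breg ψ v yprev)
        = fun v => ηk * dotp v gk - breg ψ v yprev := funext fun v => by rw [dotp_comm]
    rw [h1]
    exact ((hasFDerivAt_dotp_left gk yk).const_mul ηk).sub (breg_hasFDerivAt ψ hψ yprev yk)
  have hVI2 := vi_max hY hykY hGder hymax hv
  simp only [ContinuousLinearMap.add_apply, ContinuousLinearMap.sub_apply,
    ContinuousLinearMap.smul_apply, smul_eq_mul, dotp_left_deriv_apply] at hVI1 hVI2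
  -- scalar abbreviations
  have ha4 : fderiv ℝ φ xprev (u - xprev) =
      fderiv ℝ φ xprev (u - xk) + fderiv ℝ φ xprev (xk - xprev) := by
    rw [← map_add]; congr 1; abel
  have hb4 : fderiv ℝ ψ yprev (v - yprev) =
      fderiv ℝ ψ yprev (v - yk) + fderiv ℝ ψ yprev (yk - yprev) := by
    rw [← map_add]; congr 1; abel
  have hd1 : dotp (M.mulVec xk - gk) (v - yk) =
      dotp (M.mulVec xk) v - dotp (M.mulVec xk) yk - dotp gk v + dotp gk yk := by
    rw [dotp_sub_left, dotp_sub_right, dotp_sub_right]; ring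
  have hd2 : dotp (u - xk) (M.transpose.mulVec yk - hk) =
      dotp (M.mulVec u) yk - dotp (M.mulVec xk) yk - dotp u hk + dotp xk hk := by
    simp only [dotp_sub_right, dotp_sub_left, dotp_transpose, Matrix.mulVec_sub]; ring
  have hd3 : dotp (u - xk) hk = dotp u hk - dotp xk hk := dotp_sub_left u xk hk
  simp only [breg]
  rw [hd1, hd2, ha4, hb4]
  rw [hd3] at hVI1
  rw [dotp_sub_left, dotp_comm v gk, dotp_comm yk gk] at hVI2
  nlinarith [hVI1, hVI2]
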